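/- arXiv:cond-mat/0004104 — 2 statements merged into one kernel-verified Lean document; each statement's English description precedes it below -/
import Mathlib

section
/- For every rational number ρ = p/q in [1/3, 2/5] with p, q coprime positive integers, there exists a cyclic binary sequence of length q with exactly p ones such that every gap between consecutive ones (cyclically) is 2 or 3 and no two cyclically consecutive gaps both equal 2. -/
/-- For every rational `p/q ∈ [1/3, 2/5]` with `p, q` coprime positive
integers, there is a cyclic binary sequence of length `q` with exactly `p`
ones whose gaps between cyclically consecutive ones are all `2` or `3`, and
no two cyclically consecutive gaps both equal `2`.  Equivalently (encoding
the sequence by its cyclic gap sequence): there is a `p`-periodic gap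
sequence with values in `{2,3}`, total `q` over one period, and no two
consecutive gaps equal to `2`. -/
theorem exists_correctly_spaced (p q : ℕ) (hp : 0 < p) (hq : 0 < q)
    (hcop : Nat.Coprime p q)
    (hlow : (1 : ℚ) / 3 ≤ (p : ℚ) / q) (hhigh : (p : ℚ) / q ≤ 2 / 5) :
    ∃ g : ℕ → ℕ, (∀ i, g (i + p) = g i) ∧ (∀ i, g i = 2 ∨ g i = 3) ∧
      (∑ i ∈ Finset.range p, g i) = q ∧
      (∀ i, ¬(g i = 2 ∧ g (i + 1) = 2)) := by
  have hq0 : (0:ℚ) < (q:ℚ) := by exact_mod_cast hq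
  have h1 : q ≤ 3 * p := by
    rw [div_le_div_iff₀ (by norm_num) hq0] at hlow
    exact_mod_cast (by push_cast at hlow ⊢; linarith : (q:ℚ) ≤ 3 * p)
  have h2 : 5 * p ≤ 2 * q := by
    rw [div_le_div_iff₀ hq0 (by norm_num)] at hhigh
    exact_mod_cast (by push_cast at hhigh ⊢; linarith : ((5*p:ℕ):ℚ) ≤ ((2*q:ℕ):ℚ))
  set k := 3 * p - q with hk
  have h2k : 2 * k ≤ p := by omega
  -- the difference sequence
  set d : ℕ → ℕ := fun i => ((i+1)*k)/p - (i*k)/p with hd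
  have mono : ∀ i, (i*k)/p ≤ ((i+1)*k)/p := fun i =>
    Nat.div_le_div_right (Nat.mul_le_mul_right _ (Nat.le_succ i))
  have step : ∀ i, ((i+1)*k)/p ≤ (i*k)/p + 1 := by
    intro i
    have e : (i+1)*k = i*k + k := by ring
    rw [e]
    calc (i*k + k)/p ≤ (i*k + p)/p := Nat.div_le_div_right (by omega)
      _ = i*k/p + 1 := Nat.add_div_right _ hp
  have step2 : ∀ i, ((i+2)*k)/p ≤ (i*k)/p + 1 := by
    intro i
    have e : (i+2)*k = i*k + 2*k := by ring
    rw [e]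
    calc (i*k + 2*k)/p ≤ (i*k + p)/p := Nat.div_le_div_right (by omega)
      _ = i*k/p + 1 := Nat.add_div_right _ hp
  have shift : ∀ i, ((i+p)*k)/p = (i*k)/p + k := by
    intro i
    have e : (i+p)*k = i*k + p*k := by ring
    rw [e, Nat.add_mul_div_left _ _ hp]
  have sum_d : ∀ n, (∑ i ∈ Finset.range n, d i) = (n*k)/p := by
    intro n
    induction n with
    | zero => simp
    | succ n ih =>
      rw [Finset.sum_range_succ, ih]
      simp only [hd]
      have := mono n
      omega
  refine ⟨fun i => 3 - d i, ?_, ?_, ?_, ?_⟩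
  · intro i
    have e1 : ((i+p+1)*k)/p = ((i+1)*k)/p + k := by
      have e : i+p+1 = (i+1)+p := by ring
      rw [e, shift]
    simp only [hd]
    rw [e1, shift]
    omega
  · intro i
    have := mono i; have := step i
    simp only [hd]
    omega
  · have hsum : (∑ i ∈ Finset.range p, (3 - d i)) + (∑ i ∈ Finset.range p, d i)
        = ∑ i ∈ Finset.range p, 3 := by
      rw [← Finset.sum_add_distrib]
      refine Finset.sum_congr rfl fun i _ => ?_
      have := mono i; have := step i
      simp only [hd]
      omega
    have hdk : (∑ i ∈ Finset.range p, d i) = k := by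
      rw [sum_d, Nat.mul_comm, Nat.mul_div_cancel _ hp]
    rw [hdk, Finset.sum_const, Finset.card_range, smul_eq_mul] at hsum
    show (∑ i ∈ Finset.range p, (3 - d i)) = q
    omega
  · rintro i ⟨ha, hb⟩
    have h1' : d i = 1 := by
      have := step i; simp only [hd] at ha ⊢; omega
    have h2' : d (i+1) = 1 := by
      have := step (i+1); simp only [hd] at hb ⊢; omega
    simp only [hd] at h1' h2'
    have hm := mono i
    have hm2 := mono (i+1)
    have hs2 := step2 i
    have e : i + 1 + 1 = i + 2 := by ring
    rw [e] at h2'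
    omega
end

section
/- Let g_1, ..., g_n (n ≥ 2) be a cyclic sequence of gaps with each g_i ∈ {2, 3}, such that the density n/(Σ g_i) is at most 2/5. If two cyclically consecutive gaps both equal 2, then two cyclically consecutive gaps both equal 3. -/
/-- Let `g 0, …, g (n-1)` (`n ≥ 2`) be a cyclic sequence of gaps (encoded
as an `n`-periodic function) with each gap in `{2, 3}` and density
`n / Σ g ≤ 2/5`.  If two cyclically consecutive gaps both equal `2`, then
two cyclically consecutive gaps both equal `3`. -/
theorem consecutive_two_gaps_implies_consecutive_three_gaps
    (n : ℕ) (hn : 2 ≤ n) (g : ℕ → ℕ)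
    (hper : ∀ i, g (i + n) = g i)
    (hval : ∀ i, g i = 2 ∨ g i = 3)
    (hdens : (n : ℚ) / (∑ i ∈ Finset.range n, (g i : ℚ)) ≤ 2 / 5)
    (h22 : ∃ i, g i = 2 ∧ g (i + 1) = 2) :
    ∃ j, g j = 3 ∧ g (j + 1) = 3 := by
  by_contra h3
  push_neg at h3
  -- multi-period periodicity
  have hperk : ∀ k i, g (i + k * n) = g i := by
    intro k
    induction k with
    | zero => simp
    | succ k ih =>
      intro i
      have : i + (k + 1) * n = (i + k * n) + n := by ring
      rw [this, hper, ih]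
  set S := ∑ i ∈ Finset.range n, g i with hS
  have hcast : (∑ i ∈ Finset.range n, (g i : ℚ)) = (S : ℚ) := by
    push_cast [hS]; ring
  have hSpos : 0 < S := by
    have h0 : 0 ∈ Finset.range n := by
      simp; omega
    have := Finset.single_le_sum (f := g) (fun i _ => Nat.zero_le _) h0
    have hg0 := hval 0
    omega
  -- from density: 5 * n ≤ 2 * S
  have hkey : 5 * n ≤ 2 * S := by
    rw [hcast, div_le_div_iff₀ (by exact_mod_cast hSpos) (by norm_num)] at hdens
    have : (5 * n : ℚ) ≤ 2 * S := by linarith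
    exact_mod_cast this
  -- shift sum
  have hshift : ∑ i ∈ Finset.range n, g (i + 1) = S := by
    have h1 : ∑ i ∈ Finset.range (n + 1), g i
        = ∑ i ∈ Finset.range n, g (i + 1) + g 0 := Finset.sum_range_succ' g n
    have h2 : ∑ i ∈ Finset.range (n + 1), g i = S + g n := Finset.sum_range_succ g n
    have h3 : g n = g 0 := by have := hper 0; simpa using this
    omega
  -- get a consecutive 22 pair with index < n
  obtain ⟨i, hi2, hi2'⟩ := h22
  set j := i % n with hj
  have hjn : j < n := Nat.mod_lt _ (by omega)
  have hij : i = j + (i / n) * n := by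
    rw [hj, Nat.mul_comm]; exact (Nat.mod_add_div i n).symm
  have hgj : g j = 2 := by rw [← hperk (i / n) j, ← hij]; exact hi2
  have hgj' : g (j + 1) = 2 := by
    have : i + 1 = (j + 1) + (i / n) * n := by omega
    rw [← hperk (i / n) (j + 1), ← this]; exact hi2'
  -- strict bound
  have hlt : ∑ i ∈ Finset.range n, (g i + g (i + 1)) < ∑ i ∈ Finset.range n, 5 := by
    refine Finset.sum_lt_sum (fun k _ => ?_) ⟨j, Finset.mem_range.mpr hjn, by omega⟩
    have h1 := hval k
    have h2 := hval (k + 1)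
    rcases h1 with h1 | h1 <;> rcases h2 with h2 | h2 <;> try omega
    exact absurd h2 (h3 k h1)
  rw [Finset.sum_add_distrib, hshift, Finset.sum_const, Finset.card_range, smul_eq_mul] at hlt
  omega
end
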